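/- Let $A = \begin{pmatrix} A_1 & 0 \\ A_3 & a \end{pmatrix}$ be a real block lower-triangular matrix with $a \in \mathbb{R}$, $|a| < 1$, and suppose there is a symmetric $P_1 \succ 0$ with $A_1^\top P_1 A_1 - P_1 \prec 0$. Then there exists $p > 0$ such that, with $P = \operatorname{diag}(P_1, p)$, one has $A^\top P A - P \prec 0$. -/

import Mathlib

open Matrix

lemma coercive {n : ℕ} (Q : Matrix (Fin n) (Fin n) ℝ) (hQ : Q.PosDef) :
    ∃ c : ℝ, 0 < c ∧ ∀ x : Fin n → ℝ, c * (x ⬝ᵥ x) ≤ x ⬝ᵥ Q *ᵥ x := by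
  rcases Nat.eq_zero_or_pos n with hn | hn
  · refine ⟨1, one_pos, fun x => ?_⟩
    subst hn
    have : x = 0 := funext fun i => absurd i.2 (by simp)
    simp [this]
  · set E := EuclideanSpace ℝ (Fin n)
    set f : E → ℝ := fun x => (x : Fin n → ℝ) ⬝ᵥ Q *ᵥ (x : Fin n → ℝ) with hf
    have hcoord : ∀ i, Continuous fun x : E => (x : Fin n → ℝ) i := fun i =>
      (continuous_apply i).comp (PiLp.continuous_ofLp 2 fun _ : Fin n => ℝ)
    have hcont : Continuous f := by
      simp only [hf, dotProduct, mulVec, dotProduct]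
      exact continuous_finset_sum _ fun i _ =>
        (hcoord i).mul (continuous_finset_sum _ fun j _ => continuous_const.mul (hcoord j))
    have hsph : (Metric.sphere (0 : E) 1).Nonempty := by
      refine ⟨EuclideanSpace.single ⟨0, hn⟩ (1 : ℝ), ?_⟩
      have h := EuclideanSpace.norm_single (𝕜 := ℝ) (⟨0, hn⟩ : Fin n) 1
      show dist _ (0 : E) = 1; rw [dist_zero_right]
      rw [h]; norm_num
    obtain ⟨x0, hx0s, hx0min⟩ :=
      (isCompact_sphere (0 : E) 1).exists_isMinOn hsph hcont.continuousOn
    have hx0ne : x0 ≠ 0 := by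
      intro h
      rw [h] at hx0s
      simp at hx0s
    have hc : 0 < f x0 := hQ.dotProduct_mulVec_pos (x := (x0 : Fin n → ℝ)) ((WithLp.ofLp_eq_zero 2).ne.2 hx0ne)
    refine ⟨f x0, hc, fun x => ?_⟩
    by_cases hx : x = 0
    · simp [hx]
    · set y : E := WithLp.toLp 2 x with hy
      have hyne : y ≠ 0 := (WithLp.toLp_eq_zero 2).ne.2 hx
      have hyn : ‖y‖ ≠ 0 := norm_ne_zero_iff.mpr hyne
      have hpos : 0 < ‖y‖ := norm_pos_iff.mpr hyne
      set u : E := ‖y‖⁻¹ • y with hu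
      have hus : u ∈ Metric.sphere (0 : E) 1 := by
        simp [hu, norm_smul, abs_of_nonneg (norm_nonneg y), inv_mul_cancel₀ hyn]
      have hmin : f x0 ≤ f u := hx0min hus
      have hfu : f u = ‖y‖⁻¹ * ‖y‖⁻¹ * f y := by
        show (‖y‖⁻¹ • x) ⬝ᵥ Q *ᵥ (‖y‖⁻¹ • x) = ‖y‖⁻¹ * ‖y‖⁻¹ * (x ⬝ᵥ Q *ᵥ x)
        rw [smul_dotProduct, mulVec_smul, dotProduct_smul, smul_eq_mul, smul_eq_mul]
        ring
      have hnormsq : x ⬝ᵥ x = ‖y‖ * ‖y‖ := by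
        have h1 : x ⬝ᵥ x = ∑ i, ‖x i‖ ^ 2 := by
          simp [dotProduct, Real.norm_eq_abs, sq_abs, sq]
        rw [h1, EuclideanSpace.norm_eq, Real.mul_self_sqrt (by positivity)]
      have hle : f x0 ≤ ‖y‖⁻¹ * ‖y‖⁻¹ * f y := hfu ▸ hmin
      have key : f x0 * (‖y‖ * ‖y‖) ≤ f y := by
        have h2 := mul_le_mul_of_nonneg_right hle (mul_nonneg hpos.le hpos.le)
        calc f x0 * (‖y‖ * ‖y‖) ≤ (‖y‖⁻¹ * ‖y‖⁻¹ * f y) * (‖y‖ * ‖y‖) := h2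
          _ = f y := by field_simp
      rw [hnormsq]
      exact key

theorem stmt6 {n : ℕ}
    (A1 : Matrix (Fin n) (Fin n) ℝ) (A3 : Matrix (Fin 1) (Fin n) ℝ) (a : ℝ)
    (ha : |a| < 1)
    (P1 : Matrix (Fin n) (Fin n) ℝ) (hP1 : P1.PosDef)
    (hLyap : (-(A1ᵀ * P1 * A1 - P1)).PosDef) :
    ∃ p : ℝ, 0 < p ∧
      (let A : Matrix (Fin n ⊕ Fin 1) (Fin n ⊕ Fin 1) ℝ :=
        Matrix.fromBlocks A1 0 A3 (a • (1 : Matrix (Fin 1) (Fin 1) ℝ));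
      let P : Matrix (Fin n ⊕ Fin 1) (Fin n ⊕ Fin 1) ℝ :=
        Matrix.fromBlocks P1 0 0 (p • (1 : Matrix (Fin 1) (Fin 1) ℝ));
      (-(Aᵀ * P * A - P)).PosDef) := by
  have ha2 : a ^ 2 < 1 := by nlinarith [abs_nonneg a, sq_abs a, ha]
  set Q : Matrix (Fin n) (Fin n) ℝ := -(A1ᵀ * P1 * A1 - P1) with hQdef
  obtain ⟨c, hc, hcoer⟩ := coercive Q hLyap
  set K : ℝ := ∑ j, (A3 0 j) ^ 2 with hKdef
  have hK : 0 ≤ K := Finset.sum_nonneg fun j _ => sq_nonneg _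
  set p : ℝ := c * (1 - a ^ 2) / (2 * K + 1) with hpdef
  have h2K : (0:ℝ) < 2 * K + 1 := by linarith
  have hp : 0 < p := by
    apply div_pos _ h2K
    nlinarith
  have hpK : p * (2 * K + 1) = c * (1 - a ^ 2) := by
    rw [hpdef]; field_simp
  refine ⟨p, hp, ?_⟩
  intro A P
  -- Hermitian
  have hPh : P.IsHermitian := by
    show Pᴴ = P
    unfold P
    rw [fromBlocks_conjTranspose]
    have hP1t : P1ᵀ = P1 := by
      rw [← conjTranspose_eq_transpose_of_trivial]; exact hP1.1.eq
    simp [hP1t, hP1.1.eq]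
  have hM : (-(Aᵀ * P * A - P)).IsHermitian := by
    have h1 : (Aᵀ * P * A).IsHermitian := by
      rw [← conjTranspose_eq_transpose_of_trivial]
      exact isHermitian_conjTranspose_mul_mul A hPh
    exact (h1.sub hPh).neg
  refine posDef_iff_dotProduct_mulVec.mpr ⟨hM, ?_⟩
  intro x hx
  set x1 : Fin n → ℝ := x ∘ Sum.inl with hx1
  set x2 : Fin 1 → ℝ := x ∘ Sum.inr with hx2
  have hxe : x = Sum.elim x1 x2 := (Sum.elim_comp_inl_inr x).symm
  set t : ℝ := x2 0 with ht
  set s : ℝ := (A3 *ᵥ x1) 0 with hs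
  have star_x : star x = x := by simp
  -- key computation
  have key : star x ⬝ᵥ (-(Aᵀ * P * A - P)) *ᵥ x
      = x1 ⬝ᵥ Q *ᵥ x1 + p * (t * t - (s + a * t) * (s + a * t)) := by
    rw [star_x, hxe]
    have hAx : A *ᵥ Sum.elim x1 x2 = Sum.elim (A1 *ᵥ x1) (A3 *ᵥ x1 + a • x2) := by
      unfold A
      simp [fromBlocks_mulVec, smul_mulVec]
    have hdot : ∀ (v : Fin n ⊕ Fin 1 → ℝ),
        Sum.elim x1 x2 ⬝ᵥ (Aᵀ * P * A) *ᵥ Sum.elim x1 x2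
          = (A *ᵥ Sum.elim x1 x2) ⬝ᵥ P *ᵥ (A *ᵥ Sum.elim x1 x2) := by
      intro v
      rw [← mulVec_mulVec, ← mulVec_mulVec, dotProduct_mulVec, vecMul_transpose]
    have hPv : ∀ (y1 : Fin n → ℝ) (y2 : Fin 1 → ℝ),
        P *ᵥ Sum.elim y1 y2 = Sum.elim (P1 *ᵥ y1) (p • y2) := by
      intro y1 y2
      unfold P
      simp [fromBlocks_mulVec, smul_mulVec]
    rw [neg_mulVec, sub_mulVec, dotProduct_neg, dotProduct_sub, hdot 0, hAx, hPv, hPv,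
      sumElim_dotProduct_sumElim, sumElim_dotProduct_sumElim]
    have hQx : x1 ⬝ᵥ Q *ᵥ x1 = x1 ⬝ᵥ P1 *ᵥ x1 - (A1 *ᵥ x1) ⬝ᵥ P1 *ᵥ (A1 *ᵥ x1) := by
      rw [hQdef, neg_mulVec, sub_mulVec, dotProduct_neg, dotProduct_sub,
        ← mulVec_mulVec, ← mulVec_mulVec, dotProduct_mulVec, vecMul_transpose]
      ring
    have hd1 : ∀ (v w : Fin 1 → ℝ), v ⬝ᵥ w = v 0 * w 0 := by
      intro v w; simp [dotProduct]
    rw [hd1, hd1, hQx]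
    simp only [Pi.smul_apply, Pi.add_apply, smul_eq_mul, ← ht, ← hs]
    ring
  rw [key]
  -- positivity
  by_cases hx1z : x1 = 0
  · have hsz : s = 0 := by simp [hs, hx1z]
    have htz : t ≠ 0 := by
      intro h
      apply hx
      rw [hxe, hx1z]
      have : x2 = 0 := funext fun i => by
        have : i = 0 := Subsingleton.elim i 0
        rw [this]; exact h
      rw [this]; simp
    have hq0 : x1 ⬝ᵥ Q *ᵥ x1 = 0 := by simp [hx1z]
    rw [hq0, hsz]
    have htt : 0 < t * t := mul_self_pos.mpr htz
    have h1a : (0:ℝ) < 1 - a ^ 2 := by nlinarith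
    nlinarith [mul_pos hp (mul_pos h1a htt)]
  · have hn1 : 0 < x1 ⬝ᵥ x1 := by
      have h0 : x1 ⬝ᵥ x1 = ∑ i, x1 i ^ 2 := by simp [dotProduct, sq]
      rw [h0]
      obtain ⟨i, hi⟩ := Function.ne_iff.mp hx1z
      exact Finset.sum_pos' (fun j _ => sq_nonneg _) ⟨i, Finset.mem_univ i, pow_two_pos_of_ne_zero hi⟩
    have hq := hcoer x1
    have hs2 : s ^ 2 ≤ K * (x1 ⬝ᵥ x1) := by
      have hcs := Finset.sum_mul_sq_le_sq_mul_sq Finset.univ (fun j => A3 0 j) (fun j => x1 j)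
      have hseq : s = ∑ j, A3 0 j * x1 j := by simp [hs, mulVec, dotProduct]
      have hx1eq : x1 ⬝ᵥ x1 = ∑ j, x1 j ^ 2 := by simp [dotProduct, sq]
      rw [hseq, hx1eq, hKdef]
      exact hcs
    nlinarith [sq_nonneg ((1 - a ^ 2) * t - a * s), sq_nonneg (s + a * t), mul_pos hc hn1,
      mul_nonneg hK hn1.le, mul_le_mul_of_nonneg_left hs2 hp.le]
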